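/- Let 1 ≤ i < j ≤ n with BWT[i] = BWT[j] and SA[i] > 1 and SA[j] > 1. Then LF(i) < LF(j); that is, the last-to-first mapping is strictly increasing on positions of the BWT holding equal characters. -/
import Mathlib

variable {α : Type*} [LinearOrder α]

/-- The suffix `T[p..n]` of a 1-indexed string `T[1..n]`, as a list. -/
def sfx (T : ℕ → α) (n p : ℕ) : List α :=
  (List.range (n + 1 - p)).map (fun d => T (p + d))

/-- The Burrows–Wheeler transform determined by the text `T`, its suffix array `SA`,
and the end-of-string character `dollar`:  `BWT[i] = T[SA[i]-1]` if `SA[i] > 1`,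
and `BWT[i] = $` if `SA[i] = 1`. -/
def bwt (T : ℕ → α) (SA : ℕ → ℕ) (dollar : α) (i : ℕ) : α :=
  if SA i = 1 then dollar else T (SA i - 1)

lemma sfx_cons (T : ℕ → α) (n p : ℕ) (hp : p ≤ n) :
    sfx T n p = T p :: sfx T n (p + 1) := by
  unfold sfx
  have h : n + 1 - p = (n + 1 - (p + 1)) + 1 := by omega
  rw [h, List.range_succ_eq_map, List.map_cons, List.map_map]
  simp only [Nat.add_zero]
  congr 1
  apply List.map_congr_left
  intro d _
  simp only [Function.comp_apply]
  congr 1; omega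

/-- The last-to-first mapping `LF(i) = ISA[SA[i]-1]` is strictly
increasing on positions of the BWT holding equal characters: if `i < j`,
`BWT[i] = BWT[j]`, `SA[i] > 1` and `SA[j] > 1`, then `LF(i) < LF(j)`. -/
theorem statement13
    (n : ℕ) (T : ℕ → α) (dollar : α) (SA : ℕ → ℕ)
    -- `T[1..n]` is a string of length `n ≥ 1` ending with `$`,
    -- which is smaller than every other character and occurs only at position `n`
    (hn : 1 ≤ n) (hTn : T n = dollar)
    (hdollar : ∀ p, 1 ≤ p → p < n → dollar < T p)
    -- `SA` is a permutation of `{1,...,n}` sorting the suffixes lexicographically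
    (hSAran : ∀ i, 1 ≤ i → i ≤ n → 1 ≤ SA i ∧ SA i ≤ n)
    (hSAsurj : ∀ p, 1 ≤ p → p ≤ n → ∃ i, 1 ≤ i ∧ i ≤ n ∧ SA i = p)
    (hSAmono : ∀ i j, 1 ≤ i → i < j → j ≤ n → sfx T n (SA i) < sfx T n (SA j))
    -- `ISA` is the inverse permutation of `SA`
    (ISA : ℕ → ℕ)
    (hISA : ∀ i, 1 ≤ i → i ≤ n → ISA (SA i) = i)
    (hISAran : ∀ p, 1 ≤ p → p ≤ n → 1 ≤ ISA p ∧ ISA p ≤ n ∧ SA (ISA p) = p)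
    (i j : ℕ) (hi : 1 ≤ i) (hij : i < j) (hj : j ≤ n)
    (heq : bwt T SA dollar i = bwt T SA dollar j)
    (hSAi : 1 < SA i) (hSAj : 1 < SA j) :
    ISA (SA i - 1) < ISA (SA j - 1) := by
  have hin : i ≤ n := le_of_lt (lt_of_lt_of_le hij hj)
  have hj1 : 1 ≤ j := le_of_lt (lt_of_le_of_lt hi hij)
  obtain ⟨hSAi1, hSAin⟩ := hSAran i hi hin
  obtain ⟨hSAj1, hSAjn⟩ := hSAran j hj1 hj
  set p := SA i - 1 with hp
  set q := SA j - 1 with hq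
  have hp1 : 1 ≤ p := by omega
  have hpn : p ≤ n := by omega
  have hq1 : 1 ≤ q := by omega
  have hqn : q ≤ n := by omega
  obtain ⟨ha1, han, hap⟩ := hISAran p hp1 hpn
  obtain ⟨hb1, hbn, hbq⟩ := hISAran q hq1 hqn
  -- heads are equal
  have hT : T p = T q := by
    have h1 : bwt T SA dollar i = T p := by
      unfold bwt; rw [if_neg (by omega)]
    have h2 : bwt T SA dollar j = T q := by
      unfold bwt; rw [if_neg (by omega)]
    rw [h1, h2] at heq; exact heq
  -- sfx p < sfx q
  have hlt : sfx T n p < sfx T n q := by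
    rw [sfx_cons T n p hpn, sfx_cons T n q hqn, hT]
    have hpi : p + 1 = SA i := by omega
    have hqj : q + 1 = SA j := by omega
    rw [hpi, hqj]
    exact List.Lex.cons (hSAmono i j hi hij hj)
  -- p ≠ q
  have hpq : p ≠ q := by
    intro h
    have : SA i = SA j := by omega
    have : i = j := by
      rw [← hISA i hi hin, ← hISA j hj1 hj, this]
    omega
  by_contra hcon
  push_neg at hcon
  have hab : ISA q < ISA p := by
    rcases lt_or_eq_of_le hcon with h | h
    · exact h
    · exfalso; apply hpq
      rw [← hap, ← hbq, h]
  have := hSAmono (ISA q) (ISA p) hb1 hab han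
  rw [hap, hbq] at this
  exact absurd hlt (asymm this)
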